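/- Let χ : {1,…,n} → {ℓ,c,r} with χ⁻¹(c) ∩ {2,…,n−1} = {l₁ < ⋯ < l_m}, l₀ = 1, l_{m+1} = n. Then the map α₁'(π) = (π|_{[1,l₁]}, π|_{[l₁,n]}) is an order isomorphism from IBNC(χ) onto IBNC(χ₁) × IBNC(χ'), and the map α(π) = (π|_{[l₀,l₁]}, …, π|_{[l_m,l_{m+1}]}) is an order isomorphism from IBNC(χ) onto NC(χ₁) × NC(χ₂) × ⋯ × NC(χ_{m+1}), where all sets of partitions carry the reversed refinement order and products carry the componentwise order. Consequently IBNC(χ) is a lattice with respect to the reversed refinement order. -/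

import Mathlib

namespace FFB

/-- The three letters ℓ, c, r labelling the faces. -/
inductive Letter : Type where
  | l | c | r
deriving DecidableEq

/-- `x` is one of the letters `ℓ`, `c`. -/
def isLC (x : Letter) : Prop := x = Letter.l ∨ x = Letter.c

variable {α : Type*}

/-- The total order `≺_χ` on the index set determined by `χ`:
the elements of `χ⁻¹{ℓ,c}` in increasing order followed by the elements of
`χ⁻¹{r}` in decreasing order. -/
def chiLT [LT α] (χ : α → Letter) (i j : α) : Prop :=
  (isLC (χ i) ∧ isLC (χ j) ∧ i < j)
  ∨ (isLC (χ i) ∧ χ j = Letter.r)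
  ∨ (χ i = Letter.r ∧ χ j = Letter.r ∧ j < i)

/-- A partition (equivalence relation) `π` is `χ`-noncrossing if there is no quadruple
`s₁ ≺_χ r₁ ≺_χ s₂ ≺_χ r₂` with `s₁ ∼ s₂`, `r₁ ∼ r₂` lying in different blocks. -/
def ChiNoncrossing [LT α] (χ : α → Letter) (π : Setoid α) : Prop :=
  ∀ s₁ r₁ s₂ r₂ : α, chiLT χ s₁ r₁ → chiLT χ r₁ s₂ → chiLT χ s₂ r₂ →
    π s₁ s₂ → π r₁ r₂ → π s₁ r₁

/-- A partition `π` is `χ`-interval if whenever `i < j < k`, `i ∼ k` and `χ j = c`,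
then `i, j, k` all lie in the same block. -/
def ChiInterval [LT α] (χ : α → Letter) (π : Setoid α) : Prop :=
  ∀ i j k : α, i < j → j < k → χ j = Letter.c → π i k → π i j

/-- The set of interval-bi-noncrossing partitions with respect to `χ`. -/
def IBNC [LT α] (χ : α → Letter) : Set (Setoid α) :=
  {π | ChiNoncrossing χ π ∧ ChiInterval χ π}

/-- The set of `χ`-noncrossing partitions. -/
def NC [LT α] (χ : α → Letter) : Set (Setoid α) :=
  {π | ChiNoncrossing χ π}

/-- Restriction of a partition of `α` to a subset `V ⊆ α`. -/
def restrict (V : Set α) (σ : Setoid α) : Setoid V := Setoid.comap Subtype.val σ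

/-- Restriction of `χ` to a subset `V ⊆ α`. -/
def restChi (V : Set α) (χ : α → Letter) : V → Letter := fun x => χ x.1

/- `mu` is the Möbius function of the finite poset `P` (with the induced order):
it is the (two-sided) convolution inverse of the zeta function. -/
open Classical in
def IsMobius {β : Type*} [PartialOrder β] (P : Set β) (mu : β → β → ℂ) : Prop :=
  ∀ a ∈ P, ∀ b ∈ P, a ≤ b →
    ((∑ᶠ c ∈ {c | c ∈ P ∧ a ≤ c ∧ c ≤ b}, mu a c) = if a = b then 1 else 0) ∧
    ((∑ᶠ c ∈ {c | c ∈ P ∧ a ≤ c ∧ c ≤ b}, mu c b) = if a = b then 1 else 0)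

section Moments

variable {A : Type*} [Ring A] [LinearOrder α] [Finite α]

/-- `φ_V(z₁,…,zₙ) = φ(z_{l₁} ⋯ z_{l_k})` where `V = {l₁ < ⋯ < l_k}`. -/
noncomputable def phiV (φ : A → ℂ) (z : α → A) (V : Set α) : ℂ :=
  φ (((Set.toFinite V).toFinset.sort (· ≤ ·)).map z).prod

/-- `φ_σ(z₁,…,zₙ) = ∏_{V ∈ σ} φ_V(z₁,…,zₙ)`. -/
noncomputable def phiPart (φ : A → ℂ) (z : α → A) (σ : Setoid α) : ℂ :=
  ∏ᶠ q : Quotient σ, phiV φ z {y | Quotient.mk σ y = q}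

/-- The free-free-Boolean cumulant
`κ_{χ,π}(z₁,…,zₙ) = Σ_{σ ∈ IBNC(χ), σ ≤ π} μ_{IBNC(χ)}(σ,π) φ_σ(z₁,…,zₙ)`,
where `mu` is (a function which is) the Möbius function of `IBNC(χ)`. -/
noncomputable def cum (φ : A → ℂ) (χ : α → Letter)
    (mu : Setoid α → Setoid α → ℂ) (z : α → A) (π : Setoid α) : ℂ :=
  ∑ᶠ σ ∈ {σ | σ ∈ IBNC χ ∧ σ ≤ π}, mu σ π * phiPart φ z σ

end Moments

/-- Combinatorial free-free-Boolean independence: mixed cumulants vanish.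
`F i x` is the face of the `i`-th triple labelled by the letter `x`. -/
def CombFFB {A : Type*} [Ring A] [Algebra ℂ A] (φ : A →ₗ[ℂ] ℂ) {I : Type*}
    (F : I → Letter → NonUnitalSubalgebra ℂ A) : Prop :=
  ∀ (n : ℕ) (χ : Fin n → Letter) (ω : Fin n → I) (z : Fin n → A),
    (∀ k, z k ∈ F (ω k) (χ k)) → (¬ ∃ i, ∀ k, ω k = i) →
    ∀ mu : Setoid (Fin n) → Setoid (Fin n) → ℂ, IsMobius (IBNC χ) mu →
      cum (⇑φ) χ mu z ⊤ = 0

end FFB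

namespace FFB

-- ===================== machinery =====================
section Machinery

variable {n mm : ℕ} {χ : Fin n → Letter}

lemma lc_or_r (x : Letter) : isLC x ∨ x = Letter.r := by
  cases x <;> simp [isLC]

lemma isLC_of_c {x : Letter} (h : x = Letter.c) : isLC x := Or.inr h

lemma not_isLC_r : ¬ isLC Letter.r := by simp [isLC]

/-- context for a family of cut points -/
structure Ctx (n mm : ℕ) (χ : Fin n → Letter) (b : Fin (mm+2) → Fin n) : Prop where
  mono : StrictMono b
  b0 : (b 0 : ℕ) = 0
  bl : (b (Fin.last (mm+1)) : ℕ) + 1 = n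
  bc : ∀ t : Fin (mm+2), 0 < (t:ℕ) → (t:ℕ) < mm+1 → χ (b t) = Letter.c

variable {b : Fin (mm+2) → Fin n}

/-- the i-th interval -/
def Iv (b : Fin (mm+2) → Fin n) (i : Fin (mm+1)) : Set (Fin n) :=
  Set.Icc (b i.castSucc) (b i.succ)

/-- index of the interval containing x (the right one if x is a cut point) -/
def idx (b : Fin (mm+2) → Fin n) (x : Fin n) : Fin (mm+1) :=
  (insert 0 (Finset.univ.filter fun i : Fin (mm+1) => b i.castSucc ≤ x)).max'
    (Finset.insert_nonempty _ _)

lemma Ctx.b0le (hC : Ctx n mm χ b) (x : Fin n) : b 0 ≤ x := by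
  rw [Fin.le_def, hC.b0]; exact Nat.zero_le _

lemma Ctx.lebl (hC : Ctx n mm χ b) (x : Fin n) : x ≤ b (Fin.last (mm+1)) := by
  rw [Fin.le_def]
  have := hC.bl
  have := x.isLt
  omega


lemma Ctx.idx_le (hC : Ctx n mm χ b) {x : Fin n} {i : Fin (mm+1)}
    (h : b i.castSucc ≤ x) : i ≤ idx b x :=
  Finset.le_max' _ _ (Finset.mem_insert_of_mem (by simp [h]))

lemma Ctx.idx_spec1 (hC : Ctx n mm χ b) (x : Fin n) : b (idx b x).castSucc ≤ x := by
  have h := Finset.max'_mem (insert 0 (Finset.univ.filter fun i : Fin (mm+1) => b i.castSucc ≤ x))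
    (Finset.insert_nonempty _ _)
  rcases Finset.mem_insert.1 h with h | h
  · rw [show idx b x = 0 from h]
    exact hC.b0le x
  · exact (Finset.mem_filter.1 h).2

attribute [irreducible] idx

lemma castSucc_succ_eq {i : Fin (mm+1)} (j : Fin (mm+1)) (h : (j:ℕ) = (i:ℕ)+1) :
    j.castSucc = i.succ := by
  apply Fin.ext; simp [h]

lemma Ctx.idx_spec2 (hC : Ctx n mm χ b) (x : Fin n) : x ≤ b (idx b x).succ := by
  by_cases h : (idx b x : ℕ) < mm
  · set i := idx b x with hi
    by_contra hlt
    push_neg at hlt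
    have hj : (⟨(i:ℕ)+1, by omega⟩ : Fin (mm+1)) ≤ i := by
      refine hC.idx_le ?_
      rw [castSucc_succ_eq _ rfl]
      exact le_of_lt hlt
    rw [Fin.le_def] at hj; simp at hj
  · have hl : idx b x = Fin.last mm := by
      apply Fin.ext
      have h2 := (idx b x).isLt
      simp only [Fin.val_last]
      omega
    rw [hl, show (Fin.last mm).succ = Fin.last (mm+1) from rfl]
    exact hC.lebl x

lemma Ctx.mem_Iv_idx (hC : Ctx n mm χ b) (x : Fin n) : x ∈ Iv b (idx b x) :=
  ⟨hC.idx_spec1 x, hC.idx_spec2 x⟩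

lemma Ctx.idx_mono (hC : Ctx n mm χ b) {x y : Fin n} (h : x ≤ y) : idx b x ≤ idx b y :=
  hC.idx_le ((hC.idx_spec1 x).trans h)

lemma Ctx.idx_boundary (hC : Ctx n mm χ b) (t : Fin (mm+1)) : idx b (b t.castSucc) = t := by
  refine le_antisymm ?_ (hC.idx_le le_rfl)
  have h := hC.idx_spec1 (b t.castSucc)
  rw [hC.mono.le_iff_le, Fin.castSucc_le_castSucc_iff] at h
  exact h

lemma Ctx.idx_top (hC : Ctx n mm χ b) {t : Fin (mm+1)} (ht : (t:ℕ) < mm) :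
    idx b (b t.succ) = ⟨(t:ℕ)+1, by omega⟩ := by
  rw [show b t.succ = b ((⟨(t:ℕ)+1, by omega⟩ : Fin (mm+1)).castSucc) from
    congrArg b (castSucc_succ_eq _ rfl).symm]
  exact hC.idx_boundary _

lemma Ctx.idx_lt_top (hC : Ctx n mm χ b) {x : Fin n} {t : Fin (mm+1)}
    (hx : idx b x = t) (ht : (t:ℕ) < mm) : x < b t.succ := by
  rcases lt_or_eq_of_le (hx ▸ hC.idx_spec2 x) with h | h
  · exact h
  · exfalso
    have := hC.idx_top ht
    rw [← h, hx] at this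
    have : (t:ℕ) = (t:ℕ)+1 := congrArg Fin.val this
    omega

lemma Ctx.mem_Iv_cases (hC : Ctx n mm χ b) {x : Fin n} {i : Fin (mm+1)} (h : x ∈ Iv b i) :
    idx b x = i ∨ ((i:ℕ) < mm ∧ x = b i.succ) := by
  have h1 : i ≤ idx b x := hC.idx_le h.1
  rcases eq_or_lt_of_le h1 with h2 | h2
  · exact Or.inl h2.symm
  · right
    have h3 := hC.idx_spec1 x
    have h4 : (idx b x).castSucc ≤ i.succ := by
      rw [← hC.mono.le_iff_le]; exact h3.trans h.2
    rw [Fin.le_def] at h4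
    simp only [Fin.coe_castSucc, Fin.val_succ] at h4
    have h5 : (i:ℕ) < (idx b x : ℕ) := h2
    have h6 : (idx b x : ℕ) = (i:ℕ)+1 := by omega
    have h7 : (i:ℕ) < mm := by have := (idx b x).isLt; omega
    refine ⟨h7, le_antisymm h.2 ?_⟩
    calc b i.succ = b (idx b x).castSucc := by
          rw [castSucc_succ_eq (idx b x) h6]
        _ ≤ x := h3


-- ============ chiLT helpers ============

lemma mkLT1 {x y : Fin n} (hx : isLC (χ x)) (hy : isLC (χ y)) (h : x < y) : chiLT χ x y :=
  Or.inl ⟨hx, hy, h⟩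

lemma mkLT2 {x y : Fin n} (hx : isLC (χ x)) (hy : χ y = Letter.r) : chiLT χ x y :=
  Or.inr (Or.inl ⟨hx, hy⟩)

lemma mkLT3 {x y : Fin n} (hx : χ x = Letter.r) (hy : χ y = Letter.r) (h : y < x) : chiLT χ x y :=
  Or.inr (Or.inr ⟨hx, hy, h⟩)

lemma Ctx.F1 (hC : Ctx n mm χ b) {x y : Fin n} (h : chiLT χ x y)
    (hi : idx b x < idx b y) : isLC (χ x) := by
  rcases h with ⟨hx, _, _⟩ | ⟨hx, _⟩ | ⟨hx, hy, hxy⟩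
  · exact hx
  · exact hx
  · exact absurd (hC.idx_mono hxy.le) (by exact lt_iff_not_ge.mp hi)

lemma Ctx.F2 (hC : Ctx n mm χ b) {x y : Fin n} (h : chiLT χ x y)
    (hi : idx b y < idx b x) : χ y = Letter.r := by
  rcases h with ⟨_, _, hxy⟩ | ⟨_, hy⟩ | ⟨_, hy, _⟩
  · exact absurd (hC.idx_mono hxy.le) (lt_iff_not_ge.mp hi)
  · exact hy
  · exact hy

lemma Ctx.F3 (hC : Ctx n mm χ b) {x y : Fin n} (h : chiLT χ x y)
    (hy : isLC (χ y)) : isLC (χ x) ∧ idx b x ≤ idx b y := by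
  rcases h with ⟨hx, _, hxy⟩ | ⟨_, hy'⟩ | ⟨_, hy', _⟩
  · exact ⟨hx, hC.idx_mono hxy.le⟩
  · exact absurd hy (hy' ▸ not_isLC_r)
  · exact absurd hy (hy' ▸ not_isLC_r)

lemma Ctx.F4 (hC : Ctx n mm χ b) {x y : Fin n} (h : chiLT χ x y)
    (hx : χ x = Letter.r) : χ y = Letter.r ∧ idx b y ≤ idx b x := by
  rcases h with ⟨hx', _, _⟩ | ⟨hx', _⟩ | ⟨_, hy, hxy⟩
  · exact absurd (hx ▸ hx') not_isLC_r
  · exact absurd (hx ▸ hx') not_isLC_r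
  · exact ⟨hy, hC.idx_mono hxy.le⟩

lemma Ctx.chi_bot (hC : Ctx n mm χ b) {t : Fin (mm+1)} (ht : 0 < (t:ℕ)) :
    χ (b t.castSucc) = Letter.c :=
  hC.bc _ (by simpa using ht) (by have h2 := t.isLt; simp only [Fin.coe_castSucc]; omega)

lemma Ctx.chi_top (hC : Ctx n mm χ b) {t : Fin (mm+1)} (ht : (t:ℕ) < mm) :
    χ (b t.succ) = Letter.c :=
  hC.bc _ (by simp) (by simp only [Fin.val_succ]; omega)

lemma Ctx.O1 (hC : Ctx n mm χ b) {t : Fin (mm+1)} (ht : 0 < (t:ℕ)) {x : Fin n}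
    (hx : x ∈ Iv b t) (hne : b t.castSucc ≠ x) : chiLT χ (b t.castSucc) x := by
  rcases lc_or_r (χ x) with h | h
  · exact mkLT1 (isLC_of_c (hC.chi_bot ht)) h (lt_of_le_of_ne hx.1 hne)
  · exact mkLT2 (isLC_of_c (hC.chi_bot ht)) h

lemma Ctx.O2 (hC : Ctx n mm χ b) {t : Fin (mm+1)} (ht : (t:ℕ) < mm) {x : Fin n}
    (hx : x ∈ Iv b t) (hlc : isLC (χ x)) (hne : x ≠ b t.succ) : chiLT χ x (b t.succ) :=
  mkLT1 hlc (isLC_of_c (hC.chi_top ht)) (lt_of_le_of_ne hx.2 hne)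

lemma Ctx.O3 (hC : Ctx n mm χ b) {t : Fin (mm+1)} (ht : (t:ℕ) < mm) {x : Fin n}
    (hx : χ x = Letter.r) : chiLT χ (b t.succ) x :=
  mkLT2 (isLC_of_c (hC.chi_top ht)) hx

-- x in interval t with its idx equal to t is distinct from the top cut point of t
lemma Ctx.ne_top (hC : Ctx n mm χ b) {t : Fin (mm+1)} {x : Fin n}
    (hx : idx b x = t) (ht : (t:ℕ) < mm) : x ≠ b t.succ := by
  intro h
  have h2 := hC.idx_top ht
  rw [← h, hx] at h2
  have : (t:ℕ) = (t:ℕ)+1 := congrArg Fin.val h2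
  omega

-- ============ component bundles and glue ============

structure IsComp (χ : Fin n → Letter) (V : Set (Fin n)) (r : Fin n → Fin n → Prop) : Prop where
  symm : ∀ {x y}, r x y → r y x
  trans : ∀ {x y z}, r x y → r y z → r x z
  rfl' : ∀ x ∈ V, r x x
  supp : ∀ {x y}, r x y → x ∈ V ∧ y ∈ V
  nc : ∀ {x1 x2 x3 x4}, chiLT χ x1 x2 → chiLT χ x2 x3 → chiLT χ x3 x4 →
    r x1 x3 → r x2 x4 → r x1 x2
  intv : ∀ {i j k}, i < j → j < k → j ∈ V → χ j = Letter.c → r i k → r i j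

variable {r : Fin (mm+1) → Fin n → Fin n → Prop}

def lks (b : Fin (mm+2) → Fin n) (r : Fin (mm+1) → Fin n → Fin n → Prop)
    (s : Fin (mm+1)) : Prop := r s (b s.castSucc) (b s.succ)

def ow (b : Fin (mm+2) → Fin n) (r : Fin (mm+1) → Fin n → Fin n → Prop)
    (x y : Fin n) : Prop :=
  idx b x < idx b y ∧ r (idx b x) x (b (idx b x).succ) ∧
  (∀ s, idx b x < s → s < idx b y → lks b r s) ∧
  r (idx b y) (b (idx b y).castSucc) y

def glue (b : Fin (mm+2) → Fin n) (r : Fin (mm+1) → Fin n → Fin n → Prop)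
    (x y : Fin n) : Prop :=
  (idx b x = idx b y ∧ r (idx b x) x y) ∨ ow b r x y ∨ ow b r y x

section GlueBasic

variable (hC : Ctx n mm χ b) (hr : ∀ i, IsComp χ (Iv b i) (r i))
include hC hr

lemma glue_refl (x : Fin n) : glue b r x x :=
  Or.inl ⟨rfl, (hr _).rfl' x (hC.mem_Iv_idx x)⟩

omit hC in
lemma glue_symm {x y : Fin n} (h : glue b r x y) : glue b r y x := by
  rcases h with ⟨h1, h2⟩ | h | h
  · exact Or.inl ⟨h1.symm, (hr _).symm (h1 ▸ h2)⟩
  · exact Or.inr (Or.inr h)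
  · exact Or.inr (Or.inl h)

omit hC hr in
lemma glue_mk_same {x y : Fin n} {i : Fin (mm+1)} (hx : idx b x = i) (hy : idx b y = i)
    (h : r i x y) : glue b r x y := Or.inl ⟨hx.trans hy.symm, hx ▸ h⟩

omit hC hr in
lemma glue_mk_lt {x y : Fin n} {i j : Fin (mm+1)} (hx : idx b x = i) (hy : idx b y = j)
    (hij : i < j) (h1 : r i x (b i.succ)) (h2 : ∀ s, i < s → s < j → lks b r s)
    (h3 : r j (b j.castSucc) y) : glue b r x y :=
  Or.inr (Or.inl (by rw [ow, hx, hy]; exact ⟨hij, h1, h2, h3⟩))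

omit hC hr in
lemma glue_low {x y : Fin n} (h : glue b r x y) (hlt : idx b x < idx b y) :
    r (idx b x) x (b (idx b x).succ) := by
  rcases h with ⟨h1, _⟩ | h | h
  · exact absurd h1 hlt.ne
  · exact h.2.1
  · exact absurd h.1 (lt_asymm hlt)

omit hC hr in
lemma glue_high {x y : Fin n} (h : glue b r x y) (hlt : idx b x < idx b y) :
    r (idx b y) (b (idx b y).castSucc) y := by
  rcases h with ⟨h1, _⟩ | h | h
  · exact absurd h1 hlt.ne
  · exact h.2.2.2
  · exact absurd h.1 (lt_asymm hlt)

omit hC hr in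
lemma glue_lks {x y : Fin n} (h : glue b r x y) {s : Fin (mm+1)}
    (h1 : idx b x < s) (h2 : s < idx b y) : lks b r s := by
  rcases h with ⟨he, _⟩ | h | h
  · exact absurd he (h1.trans h2).ne
  · exact h.2.2.1 s h1 h2
  · exact absurd h.1 (lt_asymm (h1.trans h2))

omit hC hr in
lemma glue_same {x y : Fin n} (h : glue b r x y) (he : idx b x = idx b y) :
    r (idx b x) x y := by
  rcases h with ⟨_, h2⟩ | h | h
  · exact h2
  · exact absurd he h.1.ne
  · exact absurd he.symm h.1.ne

end GlueBasic


section GlueTrans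

variable (hC : Ctx n mm χ b) (hr : ∀ i, IsComp χ (Iv b i) (r i))
include hC hr

omit hC in
private lemma glue_trans_aux {x y z : Fin n} (hik : idx b x ≤ idx b z)
    (gxy : glue b r x y) (gyz : glue b r y z) : glue b r x z := by
  rcases eq_or_lt_of_le hik with hik | hik
  · -- idx x = idx z
    rcases lt_trichotomy (idx b x) (idx b y) with hj | hj | hj
    · have l1 := glue_low gxy hj
      have l2 := glue_low (glue_symm hr gyz) (hik ▸ hj)
      exact glue_mk_same rfl hik.symm ((hr _).trans l1 ((hr _).symm (by rw [← hik] at l2; exact l2)))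
    · have t1 := glue_same gxy hj
      have t2 := glue_same gyz (by rw [← hj, hik])
      rw [← hj] at t2
      exact glue_mk_same rfl hik.symm ((hr _).trans t1 t2)
    · have h1 := glue_high (glue_symm hr gxy) hj
      have h2 := glue_high gyz (hik ▸ hj)
      rw [← hik] at h2
      exact glue_mk_same rfl hik.symm ((hr _).trans ((hr _).symm h1) h2)
  · -- idx x < idx z
    rcases lt_trichotomy (idx b x) (idx b y) with hj | hj | hj
    · rcases lt_trichotomy (idx b y) (idx b z) with hk | hk | hk
      · -- idx x < idx y < idx z
        refine glue_mk_lt rfl rfl hik (glue_low gxy hj) ?_ (glue_high gyz hk)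
        intro s hs1 hs2
        rcases lt_trichotomy s (idx b y) with h | h | h
        · exact glue_lks gxy hs1 h
        · subst h
          exact (hr _).trans (glue_high gxy hj) (glue_low gyz hk)
        · exact glue_lks gyz h hs2
      · -- idx y = idx z
        refine glue_mk_lt rfl rfl hik (glue_low gxy hj) (fun s h1 h2 => glue_lks gxy h1 (hk ▸ h2)) ?_
        have t2 := glue_same gyz hk
        have h1 := glue_high gxy hj
        rw [hk] at h1 t2
        exact (hr _).trans h1 t2
      · -- idx z < idx y
        have l2 := glue_low (glue_symm hr gyz) hk
        refine glue_mk_lt rfl rfl hik (glue_low gxy hj) (fun s h1 h2 => glue_lks gxy h1 (h2.trans hk)) ?_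
        have hlk : lks b r (idx b z) := glue_lks gxy hik hk
        exact (hr _).trans hlk ((hr _).symm l2)
    · -- idx x = idx y
      have t1 := glue_same gxy hj
      have hk : idx b y < idx b z := hj ▸ hik
      have l2 := glue_low gyz hk
      rw [← hj] at l2
      refine glue_mk_lt rfl rfl hik ((hr _).trans t1 l2)
        (fun s h1 h2 => glue_lks gyz (by rw [← hj]; exact h1) h2) (glue_high gyz hk)
    · -- idx y < idx x
      have h1 := glue_high (glue_symm hr gxy) hj
      have hk : idx b y < idx b z := hj.trans hik
      have hlk : lks b r (idx b x) := glue_lks gyz hj hik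
      refine glue_mk_lt rfl rfl hik ((hr _).trans ((hr _).symm h1) hlk)
        (fun s hs1 hs2 => glue_lks gyz (hj.trans hs1) hs2) (glue_high gyz hk)

lemma glue_trans {x y z : Fin n} (gxy : glue b r x y) (gyz : glue b r y z) :
    glue b r x z := by
  rcases le_or_gt (idx b x) (idx b z) with h | h
  · exact glue_trans_aux hr h gxy gyz
  · exact glue_symm hr (glue_trans_aux hr h.le (glue_symm hr gyz) (glue_symm hr gxy))

/-- glue as a setoid -/
def glueSetoid : Setoid (Fin n) :=
  ⟨glue b r, ⟨glue_refl hC hr, fun h => glue_symm hr h, fun h h' => glue_trans hC hr h h'⟩⟩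

end GlueTrans


lemma Ctx.bot_mem (hC : Ctx n mm χ b) (t : Fin (mm+1)) : b t.castSucc ∈ Iv b t :=
  ⟨le_rfl, (hC.mono (Fin.castSucc_lt_succ : t.castSucc < t.succ)).le⟩

lemma Ctx.top_mem (hC : Ctx n mm χ b) (t : Fin (mm+1)) : b t.succ ∈ Iv b t :=
  ⟨(hC.mono (Fin.castSucc_lt_succ : t.castSucc < t.succ)).le, le_rfl⟩

section GlueIntv

variable (hC : Ctx n mm χ b) (hr : ∀ i, IsComp χ (Iv b i) (r i))
include hC hr

lemma glue_intv {x y z : Fin n} (hxy : x < y) (hyz : y < z) (hc : χ y = Letter.c)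
    (g : glue b r x z) : glue b r x y := by
  rcases lt_trichotomy (idx b x) (idx b z) with hik | hik | hik
  · have hyle : idx b x ≤ idx b y := hC.idx_mono hxy.le
    have hyc : idx b y ≤ idx b z := hC.idx_mono hyz.le
    have hamm : ((idx b x : ℕ)) < mm := by
      have h1 : (idx b x : ℕ) < (idx b z : ℕ) := hik
      have h2 := (idx b z).isLt; omega
    rcases eq_or_lt_of_le hyle with hs | hs
    · have hlt : y < b (idx b x).succ := hC.idx_lt_top hs.symm hamm
      have hy' : y ∈ Iv b (idx b x) := by rw [hs]; exact hC.mem_Iv_idx y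
      exact glue_mk_same rfl hs.symm ((hr _).intv hxy hlt hy' hc (glue_low g hik))
    · rcases eq_or_lt_of_le hyc with hsc | hsc
      · -- idx y = idx z
        have hbd : r (idx b y) (b (idx b y).castSucc) y := by
          by_cases hb : b (idx b y).castSucc = y
          · have h0 := (hr (idx b y)).rfl' _ (hC.bot_mem (idx b y))
            nth_rewrite 2 [hb] at h0
            exact h0
          · have h1 : b (idx b y).castSucc < y := lt_of_le_of_ne (hC.idx_spec1 y) hb
            have h2 := glue_high g hik
            rw [← hsc] at h2
            exact (hr _).intv h1 hyz (hC.mem_Iv_idx y) hc h2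
        exact glue_mk_lt rfl rfl hs (glue_low g hik)
          (fun s h1 h2 => glue_lks g h1 (h2.trans_le hyc)) hbd
      · -- idx y < idx z
        have hsmm : ((idx b y : ℕ)) < mm := by
          have h1 : (idx b y : ℕ) < (idx b z : ℕ) := hsc
          have h2 := (idx b z).isLt; omega
        have hlk := glue_lks g hs hsc
        have hbd : r (idx b y) (b (idx b y).castSucc) y := by
          by_cases hb : b (idx b y).castSucc = y
          · have h0 := (hr (idx b y)).rfl' _ (hC.bot_mem (idx b y))
            nth_rewrite 2 [hb] at h0
            exact h0
          · have h1 : b (idx b y).castSucc < y := lt_of_le_of_ne (hC.idx_spec1 y) hb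
            have h2 : y < b (idx b y).succ := hC.idx_lt_top rfl hsmm
            exact (hr _).intv h1 h2 (hC.mem_Iv_idx y) hc hlk
        exact glue_mk_lt rfl rfl hs (glue_low g hik)
          (fun s h1 h2 => glue_lks g h1 (h2.trans hsc)) hbd
  · -- idx x = idx z
    have hy' : y ∈ Iv b (idx b x) :=
      ⟨(hC.mem_Iv_idx x).1.trans hxy.le, hyz.le.trans (hik ▸ (hC.mem_Iv_idx z).2)⟩
    rcases hC.mem_Iv_cases hy' with hyi | ⟨hmm', hy2⟩
    · exact glue_mk_same rfl hyi ((hr _).intv hxy hyz hy' hc (glue_same g hik))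
    · exfalso
      have : z ≤ y := hy2 ▸ (hik ▸ (hC.mem_Iv_idx z).2)
      exact absurd hyz (not_lt.mpr this)
  · exact absurd (hC.idx_mono (hxy.trans hyz).le) (not_le.mpr hik)

end GlueIntv


section Restr

variable (hC : Ctx n mm χ b) (hr : ∀ i, IsComp χ (Iv b i) (r i))

omit hr in
lemma fin_no_middle {i s : Fin (mm+1)} {h : (i:ℕ)+1 < mm+1} (h1 : i < s)
    (h2 : s < (⟨(i:ℕ)+1, h⟩ : Fin (mm+1))) : False := by
  rw [Fin.lt_def] at h1 h2; simp at h2; omega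

include hC hr in
lemma glue_restrict_iff {i : Fin (mm+1)} {x y : Fin n} (hx : x ∈ Iv b i) (hy : y ∈ Iv b i) :
    glue b r x y ↔ r i x y := by
  rcases hC.mem_Iv_cases hx with hix | ⟨him, hix⟩ <;>
    rcases hC.mem_Iv_cases hy with hiy | ⟨him', hiy⟩
  · constructor
    · intro g
      have := glue_same g (hix.trans hiy.symm)
      rwa [hix] at this
    · exact fun h => glue_mk_same hix hiy h
  · -- y = b i.succ
    have hiy' : idx b y = ⟨(i:ℕ)+1, by omega⟩ := by rw [hiy]; exact hC.idx_top him'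
    constructor
    · intro g
      have hlt : idx b x < idx b y := by rw [hix, hiy']; exact Fin.lt_def.mpr (by simp)
      have := glue_low g hlt
      rw [hix, ← hiy] at this
      exact this
    · intro h
      refine glue_mk_lt hix hiy' (Fin.lt_def.mpr (by simp)) (by rw [← hiy]; exact h) ?_ ?_
      · intro s h1 h2; exact absurd h2 (fun h2 => fin_no_middle h1 h2)
      · rw [castSucc_succ_eq (⟨(i:ℕ)+1, by omega⟩ : Fin (mm+1)) rfl, ← hiy]
        refine (hr _).rfl' y ?_
        rw [hiy, ← castSucc_succ_eq (⟨(i:ℕ)+1, by omega⟩ : Fin (mm+1)) rfl]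
        exact hC.bot_mem _
  · -- x = b i.succ
    have hix' : idx b x = ⟨(i:ℕ)+1, by omega⟩ := by rw [hix]; exact hC.idx_top him
    constructor
    · intro g
      have hlt : idx b y < idx b x := by rw [hiy, hix']; exact Fin.lt_def.mpr (by simp)
      have := glue_low (glue_symm hr g) hlt
      rw [hiy, ← hix] at this
      exact (hr i).symm this
    · intro h
      refine glue_symm hr (glue_mk_lt hiy hix' (Fin.lt_def.mpr (by simp))
        (by rw [hix] at h; exact (hr i).symm h) ?_ ?_)
      · intro s h1 h2; exact absurd h2 (fun h2 => fin_no_middle h1 h2)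
      · rw [castSucc_succ_eq (⟨(i:ℕ)+1, by omega⟩ : Fin (mm+1)) rfl, ← hix]
        refine (hr _).rfl' x ?_
        rw [hix, ← castSucc_succ_eq (⟨(i:ℕ)+1, by omega⟩ : Fin (mm+1)) rfl]
        exact hC.bot_mem _
  · -- x = y = b i.succ
    rw [hix, hiy]
    constructor
    · intro _; exact (hr i).rfl' _ (hC.top_mem i)
    · intro _; exact glue_refl hC hr _

end Restr

-- ============ components of a partition ============

def rOf (b : Fin (mm+2) → Fin n) (π : Setoid (Fin n)) (i : Fin (mm+1)) (x y : Fin n) : Prop :=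
  x ∈ Iv b i ∧ y ∈ Iv b i ∧ π x y

lemma isComp_rOf {π : Setoid (Fin n)} (hπ : π ∈ IBNC χ) (i : Fin (mm+1)) :
    IsComp χ (Iv b i) (rOf b π i) where
  symm := fun h => ⟨h.2.1, h.1, π.symm h.2.2⟩
  trans := fun h h' => ⟨h.1, h'.2.1, π.trans h.2.2 h'.2.2⟩
  rfl' := fun x hx => ⟨hx, hx, π.refl x⟩
  supp := fun h => ⟨h.1, h.2.1⟩
  nc := fun h12 h23 h34 h13 h24 => ⟨h13.1, h24.1, hπ.1 _ _ _ _ h12 h23 h34 h13.2.2 h24.2.2⟩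
  intv := fun hij hjk hjV hjc h => ⟨h.1, hjV, hπ.2 _ _ _ hij hjk hjc h.2.2⟩

section RoundTrip

variable (hC : Ctx n mm χ b)
include hC

lemma glue_rOf_le {π : Setoid (Fin n)} {x y : Fin n} (g : glue b (rOf b π) x y) : π x y := by
  rcases g with ⟨_, h⟩ | h | h
  rotate_left 2
  · -- symmetric ow case; handle via a common claim below by symmetry
    exact π.symm (by
      rcases h with ⟨hlt, h1, h2, h3⟩
      -- chain from y to x
      have aux : ∀ d : ℕ, ∀ t : Fin (mm+1), ((idx b y : ℕ) + 1 + d = (t:ℕ)) → t ≤ idx b x →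
          π y (b t.castSucc) := by
        intro d
        induction d with
        | zero =>
          intro t ht _
          rw [show t.castSucc = (idx b y).succ from castSucc_succ_eq t (by omega)]
          exact h1.2.2
        | succ d ih =>
          intro t ht htc
          have hbd : (idx b y : ℕ) + 1 + d < mm + 1 := by
            have := t.isLt; omega
          set t' : Fin (mm+1) := ⟨(idx b y : ℕ) + 1 + d, hbd⟩ with ht'
          have hp := ih t' rfl (by
            rw [Fin.le_def]
            have : (t:ℕ) ≤ (idx b x : ℕ) := htc
            simp [ht']; omega)
          have hlk := h2 t' (Fin.lt_def.mpr (by simp [ht']; omega))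
            (Fin.lt_def.mpr (by
              have : (t:ℕ) ≤ (idx b x : ℕ) := htc
              simp [ht']; omega))
          have := π.trans hp hlk.2.2
          rwa [show t'.succ = t.castSucc from
            (castSucc_succ_eq t (by simp [ht']; omega)).symm] at this
      have h5 := aux ((idx b x : ℕ) - (idx b y : ℕ) - 1) (idx b x)
        (by have : (idx b y : ℕ) < (idx b x : ℕ) := hlt; omega) le_rfl
      exact π.trans h5 h3.2.2)
  · exact h.2.2
  · rcases h with ⟨hlt, h1, h2, h3⟩
    have aux : ∀ d : ℕ, ∀ t : Fin (mm+1), ((idx b x : ℕ) + 1 + d = (t:ℕ)) → t ≤ idx b y →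
        π x (b t.castSucc) := by
      intro d
      induction d with
      | zero =>
        intro t ht _
        rw [show t.castSucc = (idx b x).succ from castSucc_succ_eq t (by omega)]
        exact h1.2.2
      | succ d ih =>
        intro t ht htc
        have hbd : (idx b x : ℕ) + 1 + d < mm + 1 := by
          have := t.isLt; omega
        set t' : Fin (mm+1) := ⟨(idx b x : ℕ) + 1 + d, hbd⟩ with ht'
        have hp := ih t' rfl (by
          rw [Fin.le_def]
          have : (t:ℕ) ≤ (idx b y : ℕ) := htc
          simp [ht']; omega)
        have hlk := h2 t' (Fin.lt_def.mpr (by simp [ht']; omega))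
          (Fin.lt_def.mpr (by
            have : (t:ℕ) ≤ (idx b y : ℕ) := htc
            simp [ht']; omega))
        have := π.trans hp hlk.2.2
        rwa [show t'.succ = t.castSucc from
          (castSucc_succ_eq t (by simp [ht']; omega)).symm] at this
    have h5 := aux ((idx b y : ℕ) - (idx b x : ℕ) - 1) (idx b y)
      (by have : (idx b x : ℕ) < (idx b y : ℕ) := hlt; omega) le_rfl
    exact π.trans h5 h3.2.2

lemma le_glue_rOf {π : Setoid (Fin n)} (hπ : π ∈ IBNC χ) {x y : Fin n} (hxy : π x y) :
    glue b (rOf b π) x y := by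
  have main : ∀ x y : Fin n, π x y → idx b x < idx b y → glue b (rOf b π) x y := by
    intro x y hxy hlt
    have hamm : (idx b x : ℕ) < mm := by
      have h1 : (idx b x : ℕ) < (idx b y : ℕ) := hlt
      have := (idx b y).isLt; omega
    have hbt : ∀ t : Fin (mm+1), idx b x < t → t ≤ idx b y → π x (b t.castSucc) := by
      intro t h1 h2
      have hxt : x < b t.castSucc := by
        refine lt_of_lt_of_le (hC.idx_lt_top rfl hamm) ?_
        refine hC.mono.le_iff_le.mpr ?_
        rw [Fin.le_def]
        have : (idx b x : ℕ) < (t:ℕ) := h1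
        simp; omega
      have hty : b t.castSucc ≤ y := le_trans (by
        refine hC.mono.le_iff_le.mpr ?_
        exact Fin.castSucc_le_castSucc_iff.mpr h2) (hC.idx_spec1 y)
      rcases eq_or_lt_of_le hty with he | hlt2
      · rw [he]; exact hxy
      · refine hπ.2 x (b t.castSucc) y hxt hlt2 (hC.chi_bot ?_) hxy
        have : (idx b x : ℕ) < (t:ℕ) := h1
        omega
    have hsucc : ∀ t : Fin (mm+1), (t:ℕ) < mm → idx b x ≤ t → t < idx b y →
        π x (b t.succ) := by
      intro t htm h1 h2
      have := hbt ⟨(t:ℕ)+1, by omega⟩ (Fin.lt_def.mpr (by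
          have : (idx b x : ℕ) ≤ (t:ℕ) := h1
          simp; omega))
        (by rw [Fin.le_def]
            have : (t:ℕ) < (idx b y : ℕ) := h2
            simp; omega)
      rwa [castSucc_succ_eq _ rfl] at this
    refine glue_mk_lt rfl rfl hlt ⟨hC.mem_Iv_idx x, hC.top_mem _, hsucc _ hamm le_rfl hlt⟩
      ?_ ⟨hC.bot_mem _, hC.mem_Iv_idx y, π.trans (π.symm (hbt _ hlt le_rfl)) hxy⟩
    intro s hs1 hs2
    have hsm : (s:ℕ) < mm := by
      have h1 : (s:ℕ) < (idx b y : ℕ) := hs2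
      have := (idx b y).isLt; omega
    exact ⟨hC.bot_mem _, hC.top_mem _,
      π.trans (π.symm (hbt s hs1 hs2.le)) (hsucc s hsm hs1.le hs2)⟩
  rcases lt_trichotomy (idx b x) (idx b y) with h | h | h
  · exact main x y hxy h
  · exact glue_mk_same rfl h.symm ⟨hC.mem_Iv_idx x, by rw [h]; exact hC.mem_Iv_idx y, hxy⟩
  · exact glue_symm (fun i => isComp_rOf hπ i) (main y x (π.symm hxy) h)

end RoundTrip

lemma glue_mono {r' : Fin (mm+1) → Fin n → Fin n → Prop}
    (h : ∀ i x y, r i x y → r' i x y) {x y : Fin n} (g : glue b r x y) :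
    glue b r' x y := by
  rcases g with ⟨h1, h2⟩ | ⟨h1, h2, h3, h4⟩ | ⟨h1, h2, h3, h4⟩
  · exact Or.inl ⟨h1, h _ _ _ h2⟩
  · exact Or.inr (Or.inl ⟨h1, h _ _ _ h2, fun s a c => h _ _ _ (h3 s a c), h _ _ _ h4⟩)
  · exact Or.inr (Or.inr ⟨h1, h _ _ _ h2, fun s a c => h _ _ _ (h3 s a c), h _ _ _ h4⟩)


section GlueNC

variable (hC : Ctx n mm χ b) (hr : ∀ i, IsComp χ (Iv b i) (r i))
include hC hr

set_option maxHeartbeats 1000000 in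
lemma glue_nc {q1 q2 q3 q4 : Fin n} (h12 : chiLT χ q1 q2) (h23 : chiLT χ q2 q3)
    (h34 : chiLT χ q3 q4) (g13 : glue b r q1 q3) (g24 : glue b r q2 q4) :
    glue b r q1 q2 := by
  rcases lt_trichotomy (idx b q1) (idx b q2) with hA | hA | hA
  · -- CASE a1 < a2
    have hq1lc : isLC (χ q1) := hC.F1 h12 hA
    have ha1m : (idx b q1 : ℕ) < mm := by
      have h1 : (idx b q1 : ℕ) < (idx b q2 : ℕ) := hA
      have := (idx b q2).isLt; omega
    -- component (iii)
    have hc3 : r (idx b q2) (b (idx b q2).castSucc) q2 := by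
      rcases lt_trichotomy (idx b q4) (idx b q2) with h4 | h4 | h4
      · exact glue_high (glue_symm hr g24) h4
      · -- idx q4 = idx q2
        have A' : r (idx b q2) q2 q4 := glue_same g24 h4.symm
        have h3 : idx b q2 ≤ idx b q3 := by
          by_contra h3
          push_neg at h3
          have hq3r : χ q3 = Letter.r := hC.F2 h23 h3
          have h5 := (hC.F4 h34 hq3r).2
          rw [h4] at h5
          exact absurd h5 (not_le.mpr h3)
        rcases eq_or_lt_of_le h3 with h3 | h3
        · have TA2 : r (idx b q2) (b (idx b q2).castSucc) q3 := by
            have := glue_high g13 (h3 ▸ hA)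
            rwa [← h3] at this
          by_cases hb : b (idx b q2).castSucc = q2
          · have h0 := (hr (idx b q2)).rfl' q2 (hC.mem_Iv_idx q2)
            nth_rewrite 2 [← hb] at h0
            exact h0
          · have hO : chiLT χ (b (idx b q2).castSucc) q2 := by
              refine hC.O1 ?_ (hC.mem_Iv_idx q2) hb
              have h1 : (idx b q1 : ℕ) < (idx b q2 : ℕ) := hA
              omega
            exact (hr _).nc hO h23 h34 TA2 A'
        · -- idx q2 < idx q3
          have hlk : lks b r (idx b q2) := glue_lks g13 hA h3
          have hq4r : χ q4 = Letter.r := by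
            rcases lc_or_r (χ q4) with h | h
            · exfalso
              have h5 := (hC.F3 h34 h).2
              rw [h4] at h5
              exact absurd h3 (not_lt.mpr h5)
            · exact h
          have hq2lc : isLC (χ q2) := by
            rcases lc_or_r (χ q2) with h | h
            · exact h
            · exfalso
              exact absurd (hC.F4 h23 h).2 (not_le.mpr h3)
          have ha2m : (idx b q2 : ℕ) < mm := by
            have h1 : (idx b q2 : ℕ) < (idx b q3 : ℕ) := h3
            have := (idx b q3).isLt; omega
          by_cases hb : b (idx b q2).castSucc = q2
          · have h0 := (hr (idx b q2)).rfl' q2 (hC.mem_Iv_idx q2)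
            nth_rewrite 2 [← hb] at h0
            exact h0
          · have hO1 : chiLT χ (b (idx b q2).castSucc) q2 := by
              refine hC.O1 ?_ (hC.mem_Iv_idx q2) hb
              have h1 : (idx b q1 : ℕ) < (idx b q2 : ℕ) := hA
              omega
            have hO2 : chiLT χ q2 (b (idx b q2).succ) :=
              hC.O2 ha2m (hC.mem_Iv_idx q2) hq2lc (hC.ne_top rfl ha2m)
            have hO3 : chiLT χ (b (idx b q2).succ) q4 := hC.O3 ha2m hq4r
            exact (hr _).nc hO1 hO2 hO3 hlk A'
      · -- idx q2 < idx q4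
        have B' : r (idx b q2) q2 (b (idx b q2).succ) := glue_low g24 h4
        have ha2m : (idx b q2 : ℕ) < mm := by
          have h1 : (idx b q2 : ℕ) < (idx b q4 : ℕ) := h4
          have := (idx b q4).isLt; omega
        have h3 : idx b q2 ≤ idx b q3 := by
          by_contra h3
          push_neg at h3
          have hq3r : χ q3 = Letter.r := hC.F2 h23 h3
          have h5 := (hC.F4 h34 hq3r).2
          exact absurd h4 (not_lt.mpr (h5.trans h3.le))
        rcases eq_or_lt_of_le h3 with h3 | h3
        · have TA2 : r (idx b q2) (b (idx b q2).castSucc) q3 := by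
            have := glue_high g13 (h3 ▸ hA)
            rwa [← h3] at this
          have hq3lc : isLC (χ q3) := by
            rcases lc_or_r (χ q3) with h | h
            · exact h
            · exfalso
              have h5 := (hC.F4 h34 h).2
              rw [← h3] at h5
              exact absurd h4 (not_lt.mpr h5)
          by_cases hb : b (idx b q2).castSucc = q2
          · have h0 := (hr (idx b q2)).rfl' q2 (hC.mem_Iv_idx q2)
            nth_rewrite 2 [← hb] at h0
            exact h0
          · have hO1 : chiLT χ (b (idx b q2).castSucc) q2 := by
              refine hC.O1 ?_ (hC.mem_Iv_idx q2) hb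
              have h1 : (idx b q1 : ℕ) < (idx b q2 : ℕ) := hA
              omega
            have hm3 : q3 ∈ Iv b (idx b q2) := by rw [h3]; exact hC.mem_Iv_idx q3
            have hO2 : chiLT χ q3 (b (idx b q2).succ) :=
              hC.O2 ha2m hm3 hq3lc (hC.ne_top h3.symm ha2m)
            exact (hr _).nc hO1 h23 hO2 TA2 B'
        · have hlk : lks b r (idx b q2) := glue_lks g13 hA h3
          exact (hr _).trans hlk ((hr _).symm B')
    -- component (i)
    have hc1 : r (idx b q1) q1 (b (idx b q1).succ) := by
      rcases lt_trichotomy (idx b q1) (idx b q3) with h3 | h3 | h3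
      · exact glue_low g13 h3
      · -- idx q3 = idx q1
        have TA1 : r (idx b q1) q1 q3 := glue_same g13 h3
        have hq3r : χ q3 = Letter.r := by
          rcases lc_or_r (χ q3) with h | h
          · exfalso
            have h5 := (hC.F3 h23 h).2
            rw [← h3] at h5
            exact absurd h5 (not_le.mpr hA)
          · exact h
        have h43 := hC.F4 h34 hq3r
        have h43' : idx b q4 ≤ idx b q1 := by rw [h3]; exact h43.2
        rcases eq_or_lt_of_le h43' with h4 | h4
        · have D : r (idx b q1) q4 (b (idx b q1).succ) := by
            have := glue_low (glue_symm hr g24) (h4 ▸ hA : idx b q4 < idx b q2)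
            rwa [h4] at this
          have hO1 : chiLT χ q1 (b (idx b q1).succ) :=
            hC.O2 ha1m (hC.mem_Iv_idx q1) hq1lc (hC.ne_top rfl ha1m)
          have hO2 : chiLT χ (b (idx b q1).succ) q3 := hC.O3 ha1m hq3r
          exact (hr _).nc hO1 hO2 h34 TA1 ((hr _).symm D)
        · have hlk : lks b r (idx b q1) := glue_lks (glue_symm hr g24) h4 hA
          by_cases hb : b (idx b q1).castSucc = q1
          · have h0 := hlk
            rw [lks] at h0
            rw [hb] at h0
            exact h0
          · have hO1 : chiLT χ (b (idx b q1).castSucc) q1 := by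
              refine hC.O1 ?_ (hC.mem_Iv_idx q1) hb
              have h1 : (idx b q4 : ℕ) < (idx b q1 : ℕ) := h4
              omega
            have hO2 : chiLT χ q1 (b (idx b q1).succ) :=
              hC.O2 ha1m (hC.mem_Iv_idx q1) hq1lc (hC.ne_top rfl ha1m)
            have hO3 : chiLT χ (b (idx b q1).succ) q3 := hC.O3 ha1m hq3r
            have E := (hr _).nc hO1 hO2 hO3 hlk TA1
            exact (hr _).trans ((hr _).symm E) hlk
      · -- idx q3 < idx q1
        have hq3r : χ q3 = Letter.r := hC.F2 h23 (h3.trans hA)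
        have h43 := hC.F4 h34 hq3r
        have hlk : lks b r (idx b q1) :=
          glue_lks (glue_symm hr g24) (lt_of_le_of_lt h43.2 h3) hA
        have hb1 : r (idx b q1) (b (idx b q1).castSucc) q1 := glue_high (glue_symm hr g13) h3
        exact (hr _).trans ((hr _).symm hb1) hlk
    -- component (ii)
    have hc2 : ∀ s, idx b q1 < s → s < idx b q2 → lks b r s := by
      intro s hs1 hs2
      by_cases h4 : idx b q4 < s
      · exact glue_lks (glue_symm hr g24) h4 hs2
      · push_neg at h4
        rcases lt_trichotomy s (idx b q3) with h3 | h3 | h3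
        · exact glue_lks g13 hs1 h3
        · -- idx q3 = s
          have hq3r : χ q3 = Letter.r := by
            rcases lc_or_r (χ q3) with h | h
            · exfalso
              have h5 := (hC.F3 h23 h).2
              rw [← h3] at h5
              exact absurd h5 (not_le.mpr hs2)
            · exact h
          have h43 := hC.F4 h34 hq3r
          have h4e : idx b q4 = s := le_antisymm (h3 ▸ h43.2) h4
          have Thigh : r s (b s.castSucc) q3 := by
            have := glue_high g13 (h3 ▸ hs1)
            rwa [← h3] at this
          have D : r s q4 (b s.succ) := by
            have := glue_low (glue_symm hr g24) (h4e ▸ hs2 : idx b q4 < idx b q2)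
            rwa [h4e] at this
          have hsm : (s:ℕ) < mm := by
            have h1 : (s:ℕ) < (idx b q2 : ℕ) := hs2
            have := (idx b q2).isLt; omega
          have hO1 : chiLT χ (b s.castSucc) (b s.succ) := by
            refine hC.O1 ?_ (hC.top_mem s) (hC.mono.injective.ne (Fin.castSucc_lt_succ : s.castSucc < s.succ).ne)
            have h1 : (idx b q1 : ℕ) < (s:ℕ) := hs1
            omega
          have hO2 : chiLT χ (b s.succ) q3 := hC.O3 hsm hq3r
          exact (hr _).nc hO1 hO2 h34 Thigh ((hr _).symm D)
        · have hq3r : χ q3 = Letter.r := hC.F2 h23 (h3.trans hs2)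
          have h43 := hC.F4 h34 hq3r
          exact absurd (h43.2.trans_lt h3) (not_lt.mpr h4)
    exact glue_mk_lt rfl rfl hA hc1 hc2 hc3
  · -- CASE a1 = a2
    refine glue_mk_same rfl hA.symm ?_
    rcases lt_trichotomy (idx b q1) (idx b q3) with h3 | h3 | h3
    · -- a3 > t
      have TB : r (idx b q1) q1 (b (idx b q1).succ) := glue_low g13 h3
      have htm : (idx b q1 : ℕ) < mm := by
        have h1 : (idx b q1 : ℕ) < (idx b q3 : ℕ) := h3
        have := (idx b q3).isLt; omega
      have hq2lc : isLC (χ q2) := by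
        rcases lc_or_r (χ q2) with h | h
        · exact h
        · exfalso
          have h5 := (hC.F4 h23 h).2
          rw [← hA] at h5
          exact absurd h5 (not_le.mpr h3)
      have hm2 : q2 ∈ Iv b (idx b q1) := by rw [hA]; exact hC.mem_Iv_idx q2
      rcases lt_trichotomy (idx b q4) (idx b q1) with h4 | h4 | h4
      · have C' : r (idx b q1) (b (idx b q1).castSucc) q2 := by
          have := glue_high (glue_symm hr g24) (hA ▸ h4 : idx b q4 < idx b q2)
          rwa [← hA] at this
        by_cases hb : b (idx b q1).castSucc = q1
        · rwa [hb] at C'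
        · have hO1 : chiLT χ (b (idx b q1).castSucc) q1 := by
            refine hC.O1 ?_ (hC.mem_Iv_idx q1) hb
            have h1 : (idx b q4 : ℕ) < (idx b q1 : ℕ) := h4
            omega
          have hO2 : chiLT χ q2 (b (idx b q1).succ) :=
            hC.O2 htm hm2 hq2lc (hC.ne_top hA.symm htm)
          have E := (hr _).nc hO1 h12 hO2 C' TB
          exact (hr _).trans ((hr _).symm E) C'
      · have A' : r (idx b q1) q2 q4 := by
          have := glue_same g24 (by rw [h4]; exact hA.symm : idx b q2 = idx b q4)
          rwa [← hA] at this
        have hq4r : χ q4 = Letter.r := by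
          rcases lc_or_r (χ q4) with h | h
          · exfalso
            have h5 := (hC.F3 h34 h).2
            rw [h4] at h5
            exact absurd h5 (not_le.mpr h3)
          · exact h
        have hO2 : chiLT χ q2 (b (idx b q1).succ) :=
          hC.O2 htm hm2 hq2lc (hC.ne_top hA.symm htm)
        have hO3 : chiLT χ (b (idx b q1).succ) q4 := hC.O3 htm hq4r
        exact (hr _).nc h12 hO2 hO3 TB A'
      · have B' : r (idx b q1) q2 (b (idx b q1).succ) := by
          have := glue_low g24 (hA ▸ h4 : idx b q2 < idx b q4)
          rwa [← hA] at this
        exact (hr _).trans TB ((hr _).symm B')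
    · -- a3 = t
      have TA : r (idx b q1) q1 q3 := glue_same g13 h3
      rcases lt_trichotomy (idx b q4) (idx b q1) with h4 | h4 | h4
      · have C' : r (idx b q1) (b (idx b q1).castSucc) q2 := by
          have := glue_high (glue_symm hr g24) (hA ▸ h4 : idx b q4 < idx b q2)
          rwa [← hA] at this
        by_cases hb : b (idx b q1).castSucc = q1
        · rwa [hb] at C'
        · have hO1 : chiLT χ (b (idx b q1).castSucc) q1 := by
            refine hC.O1 ?_ (hC.mem_Iv_idx q1) hb
            have h1 : (idx b q4 : ℕ) < (idx b q1 : ℕ) := h4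
            omega
          have E := (hr _).nc hO1 h12 h23 C' TA
          exact (hr _).trans ((hr _).symm E) C'
      · have A' : r (idx b q1) q2 q4 := by
          have := glue_same g24 (by rw [h4]; exact hA.symm : idx b q2 = idx b q4)
          rwa [← hA] at this
        exact (hr _).nc h12 h23 h34 TA A'
      · have B' : r (idx b q1) q2 (b (idx b q1).succ) := by
          have := glue_low g24 (hA ▸ h4 : idx b q2 < idx b q4)
          rwa [← hA] at this
        have htm : (idx b q1 : ℕ) < mm := by
          have h1 : (idx b q1 : ℕ) < (idx b q4 : ℕ) := h4
          have := (idx b q4).isLt; omega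
        have hq3lc : isLC (χ q3) := by
          rcases lc_or_r (χ q3) with h | h
          · exact h
          · exfalso
            have h5 := (hC.F4 h34 h).2
            rw [← h3] at h5
            exact absurd h5 (not_le.mpr h4)
        have hm3 : q3 ∈ Iv b (idx b q1) := by rw [h3]; exact hC.mem_Iv_idx q3
        have hO : chiLT χ q3 (b (idx b q1).succ) :=
          hC.O2 htm hm3 hq3lc (hC.ne_top h3.symm htm)
        exact (hr _).nc h12 h23 hO TA B'
    · -- a3 < t
      have hq3r : χ q3 = Letter.r := by
        rcases lc_or_r (χ q3) with h | h
        · exfalso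
          have h5 := (hC.F3 h23 h).2
          rw [← hA] at h5
          exact absurd h5 (not_le.mpr h3)
        · exact h
      have h43 := hC.F4 h34 hq3r
      have C : r (idx b q1) (b (idx b q1).castSucc) q1 := glue_high (glue_symm hr g13) h3
      have C' : r (idx b q1) (b (idx b q1).castSucc) q2 := by
        have := glue_high (glue_symm hr g24)
          (hA ▸ (h43.2.trans_lt h3) : idx b q4 < idx b q2)
        rwa [← hA] at this
      exact (hr _).trans ((hr _).symm C) C'
  · -- CASE a2 < a1
    have hq2r : χ q2 = Letter.r := hC.F2 h12 hA
    have h32 := hC.F4 h23 hq2r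
    have h43 := hC.F4 h34 h32.1
    have hiii : r (idx b q1) (b (idx b q1).castSucc) q1 :=
      glue_high (glue_symm hr g13) (lt_of_le_of_lt h32.2 hA)
    have hii : ∀ s, idx b q2 < s → s < idx b q1 → lks b r s :=
      fun s h1 h2 => glue_lks (glue_symm hr g13) (h32.2.trans_lt h1) h2
    have ha2m : (idx b q2 : ℕ) < mm := by
      have h1 : (idx b q2 : ℕ) < (idx b q1 : ℕ) := hA
      have := (idx b q1).isLt; omega
    have hi : r (idx b q2) q2 (b (idx b q2).succ) := by
      rcases eq_or_lt_of_le (h43.2.trans h32.2) with h4 | h4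
      · -- idx q4 = idx q2, hence idx q3 = idx q2
        have h3e : idx b q3 = idx b q2 := le_antisymm h32.2 (h4 ▸ h43.2)
        have A' : r (idx b q2) q2 q4 := glue_same g24 h4.symm
        have D : r (idx b q2) q3 (b (idx b q2).succ) := by
          have := glue_low (glue_symm hr g13) (h3e ▸ hA : idx b q3 < idx b q1)
          rwa [h3e] at this
        have hO1 : chiLT χ (b (idx b q2).succ) q2 := hC.O3 ha2m hq2r
        have E := (hr _).nc hO1 h23 h34 ((hr _).symm D) A'
        exact (hr _).symm E
      · have C' : r (idx b q2) (b (idx b q2).castSucc) q2 := glue_high (glue_symm hr g24) h4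
        rcases lt_trichotomy (idx b q3) (idx b q2) with h3 | h3 | h3
        · have hlk : lks b r (idx b q2) := glue_lks (glue_symm hr g13) h3 hA
          exact (hr _).trans ((hr _).symm C') hlk
        · have D : r (idx b q2) q3 (b (idx b q2).succ) := by
            have := glue_low (glue_symm hr g13) (h3 ▸ hA : idx b q3 < idx b q1)
            rwa [h3] at this
          have hO1 : chiLT χ (b (idx b q2).castSucc) (b (idx b q2).succ) := by
            refine hC.O1 ?_ (hC.top_mem _) (hC.mono.injective.ne (Fin.castSucc_lt_succ : (idx b q2).castSucc < (idx b q2).succ).ne)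
            have h1 : (idx b q4 : ℕ) < (idx b q2 : ℕ) := h4
            omega
          have hO2 : chiLT χ (b (idx b q2).succ) q2 := hC.O3 ha2m hq2r
          have E := (hr _).nc hO1 hO2 h23 C' ((hr _).symm D)
          exact (hr _).trans ((hr _).symm C') E
        · exact absurd h32.2 (not_le.mpr h3)
    exact glue_symm hr (glue_mk_lt rfl rfl hA hi hii hiii)

end GlueNC


-- ============ assembly ============

lemma chiLT_val {V : Set (Fin n)} {x y : V} :
    chiLT (restChi V χ) x y ↔ chiLT χ x.1 y.1 := Iff.rfl

lemma restrict_rel {V : Set (Fin n)} {π : Setoid (Fin n)} {x y : V} :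
    restrict V π x y ↔ π x.1 y.1 := Iff.rfl

lemma restrict_mem_IBNC {π : Setoid (Fin n)} (hπ : π ∈ IBNC χ) (V : Set (Fin n)) :
    restrict V π ∈ IBNC (restChi V χ) :=
  ⟨fun _ _ _ _ h1 h2 h3 h4 h5 => hπ.1 _ _ _ _ h1 h2 h3 h4 h5,
   fun _ _ _ h1 h2 h3 h4 => hπ.2 _ _ _ h1 h2 h3 h4⟩

def rFrom (b : Fin (mm+2) → Fin n) (σ : ∀ i : Fin (mm+1), Setoid (Iv b i))
    (i : Fin (mm+1)) (x y : Fin n) : Prop :=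
  ∃ hx : x ∈ Iv b i, ∃ hy : y ∈ Iv b i, σ i ⟨x, hx⟩ ⟨y, hy⟩

lemma isComp_rFrom {σ : ∀ i : Fin (mm+1), Setoid (Iv b i)}
    (hσ : ∀ i, σ i ∈ IBNC (restChi (Iv b i) χ)) (i : Fin (mm+1)) :
    IsComp χ (Iv b i) (rFrom b σ i) where
  symm := fun ⟨hx, hy, h⟩ => ⟨hy, hx, (σ i).symm h⟩
  trans := fun ⟨hx, hy, h⟩ ⟨hy', hz, h'⟩ => ⟨hx, hz, (σ i).trans h h'⟩
  rfl' := fun x hx => ⟨hx, hx, (σ i).refl _⟩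
  supp := fun ⟨hx, hy, _⟩ => ⟨hx, hy⟩
  nc := fun h12 h23 h34 h13 h24 => by
    obtain ⟨h1, h3, r13⟩ := h13
    obtain ⟨h2, h4, r24⟩ := h24
    exact ⟨h1, h2, (hσ i).1 ⟨_, h1⟩ ⟨_, h2⟩ ⟨_, h3⟩ ⟨_, h4⟩ h12 h23 h34 r13 r24⟩
  intv := fun hij hjk hjV hjc h => by
    obtain ⟨h1, h2, hik⟩ := h
    exact ⟨h1, hjV, (hσ i).2 ⟨_, h1⟩ ⟨_, hjV⟩ ⟨_, h2⟩ hij hjk hjc hik⟩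

theorem main_glue (hC : Ctx n mm χ b) :
    ∃ G : IBNC χ → ∀ i : Fin (mm+1), IBNC (restChi (Set.Icc (b i.castSucc) (b i.succ)) χ),
      (∀ (π : IBNC χ) (i : Fin (mm+1)), (G π i : Setoid (Set.Icc (b i.castSucc) (b i.succ))) =
        restrict (Set.Icc (b i.castSucc) (b i.succ)) (π : Setoid (Fin n))) ∧
      Function.Bijective G ∧
      (∀ π σ : IBNC χ, π ≤ σ ↔ G π ≤ G σ) := by
  classical
  set Gmap : IBNC χ → ∀ i : Fin (mm+1), IBNC (restChi (Iv b i) χ) :=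
    fun π i => ⟨restrict (Iv b i) π.1, restrict_mem_IBNC π.2 _⟩ with hGmap
  have key : ∀ (π : Setoid (Fin n)), π ∈ IBNC χ → ∀ x y : Fin n,
      glue b (rFrom b (fun i => restrict (Iv b i) π)) x y ↔ π x y := by
    intro π hπ x y
    have hre : rFrom b (fun i => restrict (Iv b i) π) = rOf b π := by
      funext i x y
      apply propext
      constructor
      · rintro ⟨hx, hy, h⟩; exact ⟨hx, hy, h⟩
      · rintro ⟨hx, hy, h⟩; exact ⟨hx, hy, h⟩
    rw [hre]
    exact ⟨glue_rOf_le hC, le_glue_rOf hC hπ⟩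
  have memIBNC : ∀ (σ : ∀ i : Fin (mm+1), IBNC (restChi (Iv b i) χ)),
      glueSetoid hC (isComp_rFrom (fun i => (σ i).2)) ∈ IBNC χ := by
    intro σ
    constructor
    · intro s1 r1 s2 r2 h1 h2 h3 h4 h5
      exact glue_nc hC (isComp_rFrom (fun i => (σ i).2)) h1 h2 h3 h4 h5
    · intro i j k h1 h2 h3 h4
      exact glue_intv hC (isComp_rFrom (fun i => (σ i).2)) h1 h2 h3 h4
  set Ginv : (∀ i : Fin (mm+1), IBNC (restChi (Iv b i) χ)) → IBNC χ :=
    fun σ => ⟨glueSetoid hC (isComp_rFrom (fun i => (σ i).2)), memIBNC σ⟩ with hGinv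
  have hleft : Function.LeftInverse Ginv Gmap := by
    intro π
    apply Subtype.ext
    apply Setoid.ext
    intro x y
    exact key π.1 π.2 x y
  have hright : Function.RightInverse Ginv Gmap := by
    intro σ
    funext i
    apply Subtype.ext
    apply Setoid.ext
    intro x y
    show glue b _ x.1 y.1 ↔ (σ i).1 x y
    rw [glue_restrict_iff hC (isComp_rFrom (fun i => (σ i).2)) x.2 y.2]
    constructor
    · rintro ⟨hx, hy, h⟩; exact h
    · intro h; exact ⟨x.2, y.2, h⟩
  refine ⟨Gmap, fun π i => rfl, Function.bijective_iff_has_inverse.mpr ⟨Ginv, hleft, hright⟩, ?_⟩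
  intro π σ
  constructor
  · intro hle i
    show (Gmap π i : Setoid (Iv b i)) ≤ (Gmap σ i : Setoid (Iv b i))
    intro x y hxy
    exact hle hxy
  · intro hle
    show (π : Setoid (Fin n)) ≤ (σ : Setoid (Fin n))
    intro x y hxy
    have h1 : glue b (rFrom b (fun i => restrict (Iv b i) π.1)) x y :=
      (key π.1 π.2 x y).mpr hxy
    have h2 : glue b (rFrom b (fun i => restrict (Iv b i) σ.1)) x y := by
      refine glue_mono (fun i u v h => ?_) h1
      obtain ⟨hu, hv, h⟩ := h
      exact ⟨hu, hv, hle i h⟩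
    exact (key σ.1 σ.2 x y).mp h2

end Machinery

/-- With `χ⁻¹(c) ∩ {2,…,n−1} = {l₁ < ⋯ < l_m}`, `l₀ = 1`, `l_{m+1} = n`
(encoded by a strictly monotone `l : Fin (m+2) → Fin n` whose interior values enumerate the
interior `c`-points of `χ`), the map `α₁'(π) = (π|_{[1,l₁]}, π|_{[l₁,n]})` is an order
isomorphism from `IBNC(χ)` onto `IBNC(χ₁) × IBNC(χ')`, the map
`α(π) = (π|_{[l₀,l₁]}, …, π|_{[l_m,l_{m+1}]})` is an order isomorphism from `IBNC(χ)`
onto `NC(χ₁) × ⋯ × NC(χ_{m+1})` (all with the reversed refinement order, products with the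
componentwise order), and consequently `IBNC(χ)` is a lattice with respect to the reversed
refinement order. -/
theorem restriction_orderIso_and_lattice (n m : ℕ) (χ : Fin n → Letter)
    (l : Fin (m + 2) → Fin n) (hmono : StrictMono l)
    (hl0 : (l 0 : ℕ) = 0) (hlast : (l (Fin.last (m + 1)) : ℕ) + 1 = n)
    (hc : ∀ j : Fin n, (χ j = Letter.c ∧ 0 < (j : ℕ) ∧ (j : ℕ) + 2 ≤ n) ↔
      ∃ i : Fin (m + 2), 0 < (i : ℕ) ∧ (i : ℕ) < m + 1 ∧ j = l i) :
    (0 < m → ∃ F : IBNC χ →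
        IBNC (restChi (Set.Iic (l 1)) χ) × IBNC (restChi (Set.Ici (l 1)) χ),
      (∀ π : IBNC χ,
          ((F π).1 : Setoid (Set.Iic (l 1))) = restrict (Set.Iic (l 1)) (π : Setoid (Fin n)) ∧
          ((F π).2 : Setoid (Set.Ici (l 1))) = restrict (Set.Ici (l 1)) (π : Setoid (Fin n))) ∧
      Function.Bijective F ∧ (∀ π σ : IBNC χ, π ≤ σ ↔ F π ≤ F σ)) ∧
    (∃ G : IBNC χ →
        ∀ i : Fin (m + 1), NC (restChi (Set.Icc (l i.castSucc) (l i.succ)) χ),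
      (∀ (π : IBNC χ) (i : Fin (m + 1)),
          (G π i : Setoid (Set.Icc (l i.castSucc) (l i.succ))) =
            restrict (Set.Icc (l i.castSucc) (l i.succ)) (π : Setoid (Fin n))) ∧
      Function.Bijective G ∧ (∀ π σ : IBNC χ, π ≤ σ ↔ G π ≤ G σ)) ∧
    (∀ x y : IBNC χ, (∃ z : IBNC χ, IsLUB {x, y} z) ∧ (∃ z : IBNC χ, IsGLB {x, y} z)) := by
  have hCtx : Ctx n m χ l := ⟨hmono, hl0, hlast, fun t ht1 ht2 =>
    ((hc (l t)).mpr ⟨t, ht1, ht2, rfl⟩).1⟩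
  refine ⟨?_, ?_, ?_⟩
  · -- the pair map
    intro hm
    set b' : Fin 3 → Fin n := ![l 0, l 1, l (Fin.last (m+1))] with hb'
    have hb0 : b' 0 = l 0 := rfl
    have hb1 : b' 1 = l 1 := rfl
    have hb2 : b' 2 = l (Fin.last (m+1)) := rfl
    have h01 : l 0 < l 1 := hmono (Fin.lt_def.mpr (by simp))
    have h12 : l 1 < l (Fin.last (m+1)) := hmono (Fin.lt_def.mpr (by
      simp only [Fin.val_one, Fin.val_last]; omega))
    have hCtx2 : Ctx n 1 χ b' := by
      refine ⟨?_, ?_, ?_, ?_⟩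
      · intro i j hij
        fin_cases i <;> fin_cases j <;>
          first
            | exact absurd hij (by decide)
            | exact h01
            | exact h12
            | exact h01.trans h12
      · rw [hb0]; exact hl0
      · show (b' 2 : ℕ) + 1 = n
        rw [hb2]; exact hlast
      · intro t ht1 ht2
        have ht : t = 1 := by
          apply Fin.ext
          simp only [Fin.val_one]
          omega
        subst ht
        rw [hb1]
        exact ((hc (l 1)).mpr ⟨1, by simp, by simp only [Fin.val_one]; omega, rfl⟩).1
    obtain ⟨G2, hres2, hbij2, hord2⟩ := main_glue hCtx2
    have hl0le : ∀ x : Fin n, l 0 ≤ x := fun x => by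
      rw [Fin.le_def, hl0]; exact Nat.zero_le _
    have hlastge : ∀ x : Fin n, x ≤ l (Fin.last (m+1)) := fun x => by
      rw [Fin.le_def]
      have := x.isLt
      omega
    have hIic : Set.Iic (l 1) = Set.Icc (b' ((0:Fin 2)).castSucc) (b' ((0:Fin 2)).succ) := by
      have e0 : b' ((0:Fin 2)).castSucc = l 0 := rfl
      have e1 : b' ((0:Fin 2)).succ = l 1 := rfl
      rw [e0, e1]
      ext x
      simp only [Set.mem_Iic, Set.mem_Icc]
      exact ⟨fun h => ⟨hl0le x, h⟩, fun h => h.2⟩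
    have hIci : Set.Ici (l 1) = Set.Icc (b' ((1:Fin 2)).castSucc) (b' ((1:Fin 2)).succ) := by
      have e0 : b' ((1:Fin 2)).castSucc = l 1 := rfl
      have e1 : b' ((1:Fin 2)).succ = l (Fin.last (m+1)) := rfl
      rw [e0, e1]
      ext x
      simp only [Set.mem_Ici, Set.mem_Icc]
      exact ⟨fun h => ⟨h, hlastge x⟩, fun h => h.1⟩
    rw [hIic, hIci]
    refine ⟨fun π => (G2 π 0, G2 π 1), fun π => ⟨hres2 π 0, hres2 π 1⟩, ?_, ?_⟩
    · exact (piFinTwoEquiv (fun i =>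
        ↥(IBNC (restChi (Set.Icc (b' i.castSucc) (b' i.succ)) χ)))).bijective.comp hbij2
    · intro π σ
      rw [hord2 π σ]
      constructor
      · intro h
        exact ⟨h 0, h 1⟩
      · intro h i
        fin_cases i
        · exact h.1
        · exact h.2
  · -- the full product map
    obtain ⟨G, hres, hbij, hord⟩ := main_glue hCtx
    have hNCeq : ∀ i : Fin (m+1), NC (restChi (Set.Icc (l i.castSucc) (l i.succ)) χ) =
        IBNC (restChi (Set.Icc (l i.castSucc) (l i.succ)) χ) := by
      intro i
      ext τ
      simp only [NC, IBNC, Set.mem_setOf_eq]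
      refine ⟨fun h => ⟨h, ?_⟩, fun h => h.1⟩
      intro a bb cc h1 h2 h3 _
      exfalso
      have ha1 : (a.1 : ℕ) < (bb.1 : ℕ) := h1
      have ha2 : (bb.1 : ℕ) < (cc.1 : ℕ) := h2
      obtain ⟨i', hi1, hi2, hi3⟩ := (hc bb.1).mp ⟨h3, by omega, by
        have := cc.1.isLt; omega⟩
      have hm1 : l i.castSucc < l i' := by
        refine lt_of_le_of_lt a.2.1 ?_
        rw [← hi3]; exact h1
      have hm2 : l i' < l i.succ := by
        refine lt_of_lt_of_le ?_ cc.2.2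
        rw [← hi3]; exact h2
      rw [hmono.lt_iff_lt] at hm1 hm2
      have e1 : (i : ℕ) < (i' : ℕ) := hm1
      have e2 : (i' : ℕ) < (i : ℕ) + 1 := hm2
      omega
    refine ⟨fun π i => Equiv.setCongr (hNCeq i).symm (G π i), fun π i => hres π i, ?_, ?_⟩
    · exact (Equiv.piCongrRight (fun i => Equiv.setCongr (hNCeq i).symm)).bijective.comp hbij
    · intro π σ
      rw [hord π σ]
      constructor
      · intro h i; exact h i
      · intro h i; exact h i
  · -- lattice property
    have hsInf : ∀ S : Set (Setoid (Fin n)), S ⊆ IBNC χ → sInf S ∈ IBNC χ := by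
      intro S hS
      constructor
      · intro s1 r1 s2 r2 h1 h2 h3 h4 h5 s hs
        exact (hS hs).1 _ _ _ _ h1 h2 h3 (h4 s hs) (h5 s hs)
      · intro i j k h1 h2 h3 h4 s hs
        exact (hS hs).2 _ _ _ h1 h2 h3 (h4 s hs)
    intro x y
    constructor
    · -- LUB
      refine ⟨⟨sInf {w | w ∈ IBNC χ ∧ (x : Setoid (Fin n)) ≤ w ∧ (y : Setoid (Fin n)) ≤ w},
        hsInf _ (fun w hw => hw.1)⟩, ?_, ?_⟩
      · rintro w (rfl | hw)
        · show (w : Setoid (Fin n)) ≤ _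
          intro a bb hab s hs
          exact hs.2.1 hab
        · rw [Set.mem_singleton_iff] at hw
          subst hw
          show (w : Setoid (Fin n)) ≤ _
          intro a bb hab s hs
          exact hs.2.2 hab
      · intro u hu
        have hx : (x : Setoid (Fin n)) ≤ (u : Setoid (Fin n)) := hu (Set.mem_insert x {y})
        have hy : (y : Setoid (Fin n)) ≤ (u : Setoid (Fin n)) :=
          hu (Set.mem_insert_of_mem x rfl)
        intro a bb hab
        exact hab u.1 ⟨u.2, hx, hy⟩
    · -- GLB
      refine ⟨⟨sInf {(x : Setoid (Fin n)), (y : Setoid (Fin n))}, hsInf _ ?_⟩, ?_, ?_⟩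
      · rintro w (rfl | hw)
        · exact x.2
        · rw [Set.mem_singleton_iff] at hw
          subst hw
          exact y.2
      · rintro w (rfl | hw)
        · intro a bb hab
          exact hab _ (Set.mem_insert _ _)
        · rw [Set.mem_singleton_iff] at hw
          subst hw
          intro a bb hab
          exact hab _ (Set.mem_insert_of_mem _ rfl)
      · intro u hu
        have hx : (u : Setoid (Fin n)) ≤ (x : Setoid (Fin n)) := hu (Set.mem_insert x {y})
        have hy : (u : Setoid (Fin n)) ≤ (y : Setoid (Fin n)) :=
          hu (Set.mem_insert_of_mem x rfl)
        intro a bb hab s hs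
        rcases hs with rfl | hs
        · exact hx hab
        · rw [Set.mem_singleton_iff] at hs
          subst hs
          exact hy hab

end FFB
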